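/- arXiv:2106.07948 — 4 statements merged into one kernel-verified Lean document; each statement's English description precedes it below -/
import Mathlib

section
/- Let r be a positive integer and let F be an r×r complex Hermitian matrix such that ‖F − I‖_max ≤ 1/(3r²), where I is the r×r identity matrix. Then there exists an r×r complex Hermitian matrix G such that G·F·G = I and ‖G − I‖_max ≤ ‖F − I‖_max. -/
/-- The max matrix norm `‖F‖_max = max_{j,k} |F_{jk}|` of a complex `r × r` matrix. -/
noncomputable def maxNorm {r : ℕ} (F : Matrix (Fin r) (Fin r) ℂ) : ℝ :=
  ⨆ j : Fin r, ⨆ k : Fin r, ‖F j k‖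

/-- Scalar inequality: `|t⁻¹ᐟ² - 1 + (t-1)/2| ≤ (3/2)(t-1)²` for `t ≥ 2/3`. -/
lemma key_scalar (t : ℝ) (ht : 2/3 ≤ t) :
    |(Real.sqrt t)⁻¹ - 1 + (t - 1)/2| ≤ (3/2) * (t - 1)^2 := by
  have ht0 : (0:ℝ) < t := by linarith
  set s := Real.sqrt t with hs
  have hs0 : 0 < s := Real.sqrt_pos.mpr ht0
  have hs2 : s^2 = t := Real.sq_sqrt ht0.le
  have hs23 : 2/3 ≤ s^2 := by rw [hs2]; exact ht
  rw [← hs2]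
  have e : s⁻¹ - 1 + (s^2 - 1)/2 = (s-1)^2 * (s+2) / (2*s) := by
    field_simp; ring
  rw [e, abs_of_nonneg (by positivity), div_le_iff₀ (by positivity)]
  have h4 : s + 2 ≤ 3*s*(s+1)^2 := by
    nlinarith [mul_nonneg hs0.le (show (0:ℝ) ≤ 3*s^2-2 by linarith)]
  calc (s-1)^2*(s+2) ≤ (s-1)^2*(3*s*(s+1)^2) :=
        mul_le_mul_of_nonneg_left h4 (sq_nonneg _)
    _ = 3/2*(s^2-1)^2*(2*s) := by ring

/-- If `F` is an `r × r` Hermitian complex matrix with `‖F - I‖_max ≤ 1/(3r²)`, then there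
exists a Hermitian matrix `G` with `G * F * G = I` and `‖G - I‖_max ≤ ‖F - I‖_max`. -/
theorem stmt_0 {r : ℕ} (hr : 0 < r) (F : Matrix (Fin r) (Fin r) ℂ)
    (hF : F.IsHermitian) (hsmall : maxNorm (F - 1) ≤ 1 / (3 * (r : ℝ) ^ 2)) :
    ∃ G : Matrix (Fin r) (Fin r) ℂ, G.IsHermitian ∧ G * F * G = 1 ∧
      maxNorm (G - 1) ≤ maxNorm (F - 1) := by
  have : Nonempty (Fin r) := ⟨⟨0, hr⟩⟩
  set ε := maxNorm (F - 1) with hε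
  -- entries of F - 1 are bounded by ε
  have hεle : ∀ j k, ‖(F - 1) j k‖ ≤ ε := by
    intro j k
    exact le_trans
      (le_ciSup (f := fun k => ‖(F - 1) j k‖) (Finite.bddAbove_range _) k)
      (le_ciSup (f := fun j => ⨆ k, ‖(F - 1) j k‖) (Finite.bddAbove_range _) j)
  have hε0 : 0 ≤ ε := le_trans (norm_nonneg _) (hεle ⟨0, hr⟩ ⟨0, hr⟩)
  have hr1 : (1:ℝ) ≤ r := by exact_mod_cast hr
  have hrε : (r:ℝ) * ε ≤ 1/3 := by
    have : (r:ℝ) * ε ≤ r * (1 / (3 * (r:ℝ)^2)) :=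
      mul_le_mul_of_nonneg_left hsmall (by positivity)
    calc (r:ℝ) * ε ≤ r * (1 / (3 * (r:ℝ)^2)) := this
      _ = 1 / (3 * r) := by field_simp
      _ ≤ 1/3 := by
          rw [div_le_div_iff₀ (by positivity) (by norm_num)]
          nlinarith
  set lam := hF.eigenvalues with hlam
  set u : Matrix (Fin r) (Fin r) ℂ := (hF.eigenvectorUnitary : Matrix (Fin r) (Fin r) ℂ)
    with hu
  have hu1 : u * star u = 1 := Matrix.mem_unitaryGroup_iff.mp hF.eigenvectorUnitary.2
  have hu2 : star u * u = 1 := Matrix.mem_unitaryGroup_iff'.mp hF.eigenvectorUnitary.2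
  -- eigenvalue bound
  have heig : ∀ i, |lam i - 1| ≤ r * ε := by
    intro i
    set v : Fin r → ℂ := ⇑(hF.eigenvectorBasis i) with hv
    obtain ⟨j, hj⟩ := Finite.exists_max (fun k => ‖v k‖)
    have hvne : v ≠ 0 := by
      intro h
      exact hF.eigenvectorBasis.orthonormal.ne_zero i (PiLp.ext fun k => congrFun h k)
    have hvj : 0 < ‖v j‖ := by
      rcases Function.ne_iff.mp hvne with ⟨k, hk⟩
      exact lt_of_lt_of_le (by simpa using hk : 0 < ‖v k‖) (hj k)
    have hmv : ((lam i : ℂ) - 1) * v j = ∑ k, (F - 1) j k * v k := by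
      have hFv : ∑ k, F j k * v k = (lam i : ℂ) * v j := by
        have h0 := congrFun (hF.mulVec_eigenvectorBasis i) j
        simpa [Matrix.mulVec, dotProduct, Complex.real_smul] using h0
      have h1v : ∑ k, (1 : Matrix (Fin r) (Fin r) ℂ) j k * v k = v j := by
        simp [Matrix.one_apply]
      calc ((lam i : ℂ) - 1) * v j
          = ∑ k, F j k * v k - ∑ k, (1 : Matrix (Fin r) (Fin r) ℂ) j k * v k := by
            rw [hFv, h1v]; ring
        _ = ∑ k, (F - 1) j k * v k := by
            rw [← Finset.sum_sub_distrib]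
            exact Finset.sum_congr rfl fun k _ => by rw [Matrix.sub_apply, sub_mul]
    have habs : |lam i - 1| * ‖v j‖ ≤ (r * ε) * ‖v j‖ := by
      have : ‖((lam i : ℂ) - 1) * v j‖ ≤ ∑ k : Fin r, ε * ‖v j‖ := by
        rw [hmv]
        refine le_trans (norm_sum_le _ _) (Finset.sum_le_sum fun k _ => ?_)
        rw [norm_mul]
        exact mul_le_mul (hεle j k) (hj k) (norm_nonneg _) hε0
      rw [norm_mul] at this
      have habs1 : ‖(lam i : ℂ) - 1‖ = |lam i - 1| := by
        rw [← Complex.ofReal_one, ← Complex.ofReal_sub, Complex.norm_real, Real.norm_eq_abs]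
      rw [habs1] at this
      simpa [Finset.sum_const, Finset.card_univ, mul_assoc] using this
    exact le_of_mul_le_mul_right habs hvj
  have hlam23 : ∀ i, 2/3 ≤ lam i := by
    intro i
    have := abs_le.mp (le_trans (heig i) hrε)
    linarith [this.1]
  have hlampos : ∀ i, 0 < lam i := fun i => lt_of_lt_of_le (by norm_num) (hlam23 i)
  -- define G
  set g : Fin r → ℝ := fun i => (Real.sqrt (lam i))⁻¹ with hg
  set G : Matrix (Fin r) (Fin r) ℂ :=
    u * Matrix.diagonal (fun i => (g i : ℂ)) * star u with hG
  -- entry formula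
  have hS : ∀ (d : Fin r → ℂ) j k, (u * Matrix.diagonal d * star u) j k
      = ∑ i, d i * (u j i * star (u k i)) := by
    intro d j k
    rw [Matrix.mul_apply]
    simp only [Matrix.mul_diagonal, Matrix.star_apply]
    exact Finset.sum_congr rfl fun i _ => by ring
  refine ⟨G, ?_, ?_, ?_⟩
  · -- Hermitian
    rw [hG, Matrix.star_eq_conjTranspose]
    exact Matrix.isHermitian_mul_mul_conjTranspose u
      (Matrix.isHermitian_diagonal_iff.mpr fun i => by
        simp [isSelfAdjoint_iff, Complex.star_def, Complex.conj_ofReal])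
  · -- G * F * G = 1
    have hmul : ∀ (a b : Fin r → ℂ),
        (u * Matrix.diagonal a * star u) * (u * Matrix.diagonal b * star u)
        = u * Matrix.diagonal (a * b) * star u := by
      intro a b
      calc (u * Matrix.diagonal a * star u) * (u * Matrix.diagonal b * star u)
          = u * (Matrix.diagonal a * ((star u * u) * (Matrix.diagonal b * star u))) := by
            simp only [Matrix.mul_assoc]
        _ = u * ((Matrix.diagonal a * Matrix.diagonal b) * star u) := by
            rw [hu2, Matrix.one_mul, Matrix.mul_assoc]
        _ = u * Matrix.diagonal (a * b) * star u := by
            rw [Matrix.diagonal_mul_diagonal, Matrix.mul_assoc,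
              show (fun i => a i * b i) = a * b from rfl]
    have hFspec : F = u * Matrix.diagonal (RCLike.ofReal ∘ lam) * star u := hF.spectral_theorem
    rw [hG, hFspec, hmul, hmul]
    have : ((fun i => (g i : ℂ)) * (RCLike.ofReal ∘ lam) * fun i => (g i : ℂ)) =
        fun _ => (1 : ℂ) := by
      funext i
      have hsq : Real.sqrt (lam i) * Real.sqrt (lam i) = lam i := Real.mul_self_sqrt (hlampos i).le
      have h2 : Real.sqrt (lam i) ≠ 0 := ne_of_gt (Real.sqrt_pos.mpr (hlampos i))
      have h1 : g i * lam i * g i = 1 := by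
        rw [hg]; field_simp; rw [Real.sq_sqrt (hlampos i).le]
      simp only [Pi.mul_apply, Function.comp_apply]
      rw [show (RCLike.ofReal (lam i) : ℂ) = ((lam i : ℝ) : ℂ) from rfl]
      exact_mod_cast congrArg (Complex.ofReal) h1
    rw [this, Matrix.diagonal_one, Matrix.mul_one, hu1]
  · -- norm bound
    refine ciSup_le fun j => ciSup_le fun k => ?_
    -- row norm sums
    have hrow : ∀ j, ∑ i, ‖u j i‖ ^ 2 = 1 := by
      intro j
      have := congrFun (congrFun hu1 j) j
      simp only [Matrix.mul_apply, Matrix.star_apply, Matrix.one_apply_eq] at this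
      have h2 : ∀ i : Fin r, u j i * star (u j i) = ((‖u j i‖)^2 : ℝ) := by
        intro i
        rw [Complex.star_def, Complex.mul_conj, Complex.sq_norm, Complex.normSq_eq_norm_sq,
          Complex.sq_norm]
      rw [Finset.sum_congr rfl fun i _ => h2 i] at this
      exact_mod_cast (by push_cast at this ⊢; exact_mod_cast this)
    have hCS : ∀ j k, ∑ i, ‖u j i‖ * ‖u k i‖ ≤ 1 := by
      intro j k
      have h := Finset.sum_mul_sq_le_sq_mul_sq Finset.univ
        (fun i => ‖u j i‖) (fun i => ‖u k i‖)
      rw [hrow j, hrow k, one_mul] at h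
      nlinarith [Finset.sum_nonneg (fun i (_ : i ∈ Finset.univ) =>
        mul_nonneg (norm_nonneg (u j i)) (norm_nonneg (u k i)))]
    -- (G - 1) j k + (F - 1) j k / 2
    have hone : (1 : Matrix (Fin r) (Fin r) ℂ) j k = ∑ i, u j i * star (u k i) := by
      rw [← hu1]; simp [Matrix.mul_apply, Matrix.star_apply]
    have hGjk : (G - 1) j k = ∑ i, ((g i : ℂ) - 1) * (u j i * star (u k i)) := by
      rw [Matrix.sub_apply, hG, hS, hone, ← Finset.sum_sub_distrib]
      exact Finset.sum_congr rfl fun i _ => by ring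
    have hFjk : (F - 1) j k = ∑ i, ((lam i : ℂ) - 1) * (u j i * star (u k i)) := by
      rw [Matrix.sub_apply, (show F = u * Matrix.diagonal (RCLike.ofReal ∘ lam) * star u from hF.spectral_theorem), hS, hone, ← Finset.sum_sub_distrib]
      exact Finset.sum_congr rfl fun i _ => by
        simp only [Function.comp_apply]
        rw [show (RCLike.ofReal (lam i) : ℂ) = ((lam i : ℝ) : ℂ) from rfl]; ring
    have hcomb : (G - 1) j k = (-(1:ℂ)/2) * (F - 1) j k
        + ∑ i, ((g i : ℂ) - 1 + ((lam i : ℂ) - 1)/2) * (u j i * star (u k i)) := by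
      rw [hGjk, hFjk, Finset.mul_sum, ← Finset.sum_add_distrib]
      exact Finset.sum_congr rfl fun i _ => by ring
    have hterm : ∀ i, ‖(g i : ℂ) - 1 + ((lam i : ℂ) - 1)/2‖
        ≤ (3/2) * ((r:ℝ) * ε)^2 := by
      intro i
      have h1 : ((g i : ℂ) - 1 + ((lam i : ℂ) - 1)/2)
          = ((g i - 1 + (lam i - 1)/2 : ℝ) : ℂ) := by push_cast; ring
      rw [h1, Complex.norm_real, Real.norm_eq_abs]
      refine le_trans (key_scalar (lam i) (hlam23 i)) ?_
      have hb := abs_le.mp (heig i)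
      have h2 : (lam i - 1)^2 ≤ ((r:ℝ) * ε)^2 := sq_le_sq' (by linarith [hb.1]) hb.2
      linarith
    have hsum : ‖∑ i, ((g i : ℂ) - 1 + ((lam i : ℂ) - 1)/2) * (u j i * star (u k i))‖
        ≤ (3/2) * ((r:ℝ) * ε)^2 := by
      refine le_trans (norm_sum_le _ _) ?_
      calc ∑ i, ‖((g i : ℂ) - 1 + ((lam i : ℂ) - 1)/2) * (u j i * star (u k i))‖
          ≤ ∑ i, (3/2) * ((r:ℝ) * ε)^2 * (‖u j i‖ * ‖u k i‖) := by
            refine Finset.sum_le_sum fun i _ => ?_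
            have habs2 : ‖star (u k i)‖ = ‖u k i‖ := by
              rw [Complex.star_def, Complex.norm_conj]
            rw [norm_mul, norm_mul, habs2]
            exact mul_le_mul_of_nonneg_right (hterm i)
              (mul_nonneg (norm_nonneg _) (norm_nonneg _))
        _ ≤ (3/2) * ((r:ℝ) * ε)^2 := by
            rw [← Finset.mul_sum]
            nlinarith [hCS j k, sq_nonneg ((r:ℝ)*ε)]
    have hfinal : ‖(G - 1) j k‖ ≤ ε := by
      rw [hcomb]
      refine le_trans (norm_add_le _ _) ?_
      rw [norm_mul]
      have h1 : ‖-(1:ℂ)/2‖ = 1/2 := by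
        rw [norm_div, norm_neg, norm_one, Complex.norm_two]
      have h2 : ‖(F-1) j k‖ ≤ ε := hεle j k
      have h5 : 3*(r:ℝ)^2*ε ≤ 1 := by
        have hr2 : (0:ℝ) < 3*(r:ℝ)^2 := by positivity
        calc 3*(r:ℝ)^2*ε ≤ 3*(r:ℝ)^2*(1/(3*(r:ℝ)^2)) :=
              mul_le_mul_of_nonneg_left hsmall hr2.le
          _ = 1 := by field_simp
      have h3 : (3/2) * ((r:ℝ) * ε)^2 ≤ ε / 2 := by
        nlinarith [mul_le_mul_of_nonneg_right h5 hε0]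
      rw [h1]
      nlinarith [hsum, norm_nonneg ((F-1) j k)]
    exact hfinal
end

section
/- Let H be a complex inner product space, r a positive integer, and w₁, …, w_r vectors in H whose Gram matrix F, defined by F_{jk} := ⟨w_j, w_k⟩, satisfies ‖F − I‖_max ≤ 1/(3r²). Then there exists an r×r complex Hermitian matrix G with ‖G − I‖_max ≤ ‖F − I‖_max such that the vectors f_k := Σ_{l=1}^r G_{lk} w_l, for k = 1, …, r, form an orthonormal family: ⟨f_k, f_{k'}⟩ = δ_{kk'} for all k, k'. -/
section Aux

attribute [local instance] Matrix.linftyOpSemiNormedRing Matrix.linftyOpNormedRing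
  Matrix.linftyOpNormedAlgebra

open Polynomial in
theorem ring_choose_succ (x : ℝ) (n : ℕ) :
    Ring.choose x (n + 1) = Ring.choose x n * (x - n) / (n + 1) := by
  have h1 := Ring.descPochhammer_eq_factorial_smul_choose x (n + 1)
  have h2 := Ring.descPochhammer_eq_factorial_smul_choose x n
  rw [descPochhammer_succ_right, smeval_mul, h2, smeval_sub, smeval_X, smeval_natCast] at h1
  have hfac : (0:ℝ) < (n.factorial : ℝ) := by positivity
  simp only [nsmul_eq_mul, Nat.factorial_succ, Nat.cast_mul] at h1
  rw [eq_div_iff (by positivity)]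
  push_cast at h1
  nlinarith [h1]

theorem ring_choose_neg_one (n : ℕ) : Ring.choose (-1 : ℝ) n = (-1) ^ n := by
  induction n with
  | zero => simp [Ring.choose_zero_right]
  | succ n ih =>
    have h := Ring.choose_succ_succ (-1 : ℝ) n
    rw [neg_add_cancel, Ring.choose_zero_succ, ih] at h
    have : Ring.choose (-1 : ℝ) (n+1) = -(-1)^n := by linarith
    rw [this, pow_succ]; ring

theorem ring_choose_half_bound (n : ℕ) : |Ring.choose (-(1/2) : ℝ) (n+1)| ≤ 1/2 := by
  induction n with
  | zero => rw [zero_add, Ring.choose_one_right]; rw [abs_neg, abs_of_nonneg] <;> norm_num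
  | succ n ih =>
    rw [ring_choose_succ, abs_div, abs_mul]
    have h1 : |(-(1/2) : ℝ) - (n+1)| ≤ |((n:ℝ)+1+1)| := by
      rw [abs_of_nonpos (by push_cast; linarith), abs_of_nonneg (by positivity)]
      push_cast; linarith
    have h2 : (0:ℝ) < |((n:ℝ)+1+1)| := by positivity
    calc |Ring.choose (-(1/2):ℝ) (n+1)| * |(-(1/2):ℝ) - ↑(n+1)| / |(↑(n+1):ℝ)+1|
        ≤ (1/2) * |(↑(n+1):ℝ)+1| / |(↑(n+1):ℝ)+1| := by
          push_cast at h1 ⊢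
          gcongr
      _ = 1/2 := by field_simp

theorem ring_choose_half_bound' (n : ℕ) : |Ring.choose (-(1/2) : ℝ) n| ≤ 1 := by
  cases n with
  | zero => simp [Ring.choose_zero_right]
  | succ n => linarith [ring_choose_half_bound n]

theorem choose_conv (n : ℕ) :
    ∑ ij ∈ Finset.HasAntidiagonal.antidiagonal n,
      Ring.choose (-(1/2) : ℝ) ij.1 * Ring.choose (-(1/2) : ℝ) ij.2 = (-1) ^ n := by
  have h := Ring.add_choose_eq (r := (-(1/2) : ℝ)) (s := (-(1/2) : ℝ)) n (Commute.all _ _)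
  rw [show (-(1/2) : ℝ) + -(1/2) = -1 by norm_num, ring_choose_neg_one] at h
  exact h.symm

section helpers
variable {r : ℕ}

theorem rowsum_le_norm (A : Matrix (Fin r) (Fin r) ℂ) (i : Fin r) :
    ∑ j, ‖A i j‖ ≤ ‖A‖ := by
  rw [Matrix.linfty_opNorm_def]
  have h1 : (∑ j, ‖A i j‖₊ : NNReal) ≤ Finset.univ.sup fun i => ∑ j, ‖A i j‖₊ :=
    Finset.le_sup (f := fun i => ∑ j, ‖A i j‖₊) (Finset.mem_univ i)
  calc ∑ j, ‖A i j‖ = ((∑ j, ‖A i j‖₊ : NNReal) : ℝ) := by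
        push_cast; rfl
    _ ≤ _ := NNReal.coe_le_coe.mpr h1

theorem entry_le_norm (A : Matrix (Fin r) (Fin r) ℂ) (i j : Fin r) :
    ‖A i j‖ ≤ ‖A‖ :=
  le_trans (Finset.single_le_sum (f := fun j => ‖A i j‖)
    (fun _ _ => norm_nonneg _) (Finset.mem_univ j)) (rowsum_le_norm A i)

theorem norm_le_of_rowsum (A : Matrix (Fin r) (Fin r) ℂ) {b : ℝ} (hb : 0 ≤ b)
    (h : ∀ i, ∑ j, ‖A i j‖ ≤ b) : ‖A‖ ≤ b := by
  rw [Matrix.linfty_opNorm_def]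
  have key : (Finset.univ.sup fun i => ∑ j, ‖A i j‖₊) ≤ (⟨b, hb⟩ : NNReal) := by
    refine Finset.sup_le fun i _ => ?_
    have := h i
    apply NNReal.coe_le_coe.mp
    push_cast
    exact this
  exact_mod_cast key

end helpers

set_option maxHeartbeats 1000000 in
theorem key {r : ℕ} (hr : 0 < r) (E : Matrix (Fin r) (Fin r) ℂ) (hE : E.IsHermitian)
    {ε : ℝ} (hε0 : 0 ≤ ε) (hent : ∀ j k, ‖E j k‖ ≤ ε)
    (hεsmall : (r : ℝ) * ε ≤ 1/3) :
    ∃ G : Matrix (Fin r) (Fin r) ℂ, G.IsHermitian ∧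
      (∀ j k, ‖(G - 1) j k‖ ≤ ε) ∧ G * (1 + E) * G = 1 := by
  have : Nonempty (Fin r) := ⟨⟨0, hr⟩⟩
  have hnorm : ‖E‖ ≤ 1/3 := by
    refine norm_le_of_rowsum E (by norm_num) fun i => ?_
    calc ∑ j, ‖E i j‖ ≤ ∑ _j : Fin r, ε := Finset.sum_le_sum fun j _ => hent i j
      _ = r * ε := by simp [mul_comm]
      _ ≤ 1/3 := hεsmall
  have hlt : ‖E‖ < 1 := lt_of_le_of_lt hnorm (by norm_num)
  set c : ℕ → ℝ := fun n => Ring.choose (-(1/2) : ℝ) n with hc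
  have hc0 : c 0 = 1 := Ring.choose_zero_right _
  have hcb : ∀ n, |c n| ≤ 1 := ring_choose_half_bound'
  have hcb' : ∀ n, |c (n+1)| ≤ 1/2 := ring_choose_half_bound
  have hpownorm : ∀ n : ℕ, ‖E ^ n‖ ≤ ‖E‖ ^ n := fun n => norm_pow_le E n
  have hpowent : ∀ (n : ℕ) (j k : Fin r), ‖(E ^ (n+1)) j k‖ ≤ ε * ‖E‖ ^ n := by
    intro n j k
    have hev : (E ^ (n+1)) j k = ∑ l, E j l * (E ^ n) l k := by
      rw [pow_succ']; exact Matrix.mul_apply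
    rw [hev]
    calc ‖∑ l, E j l * (E ^ n) l k‖
        ≤ ∑ l, ‖E j l * (E ^ n) l k‖ := norm_sum_le _ _
      _ = ∑ l, ‖E j l‖ * ‖(E ^ n) l k‖ := by simp [map_mul]
      _ ≤ ∑ l, ε * ‖(E ^ n) l k‖ :=
          Finset.sum_le_sum fun l _ =>
            mul_le_mul_of_nonneg_right (hent j l) (norm_nonneg _)
      _ = ε * ∑ l, ‖(E ^ n) l k‖ := by rw [Finset.mul_sum]
      _ ≤ ε * ‖E‖ ^ n := by
          refine mul_le_mul_of_nonneg_left ?_ hε0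
          have hsym : ∀ l, ‖(E ^ n) l k‖ = ‖(E ^ n) k l‖ := by
            intro l
            rw [← (hE.pow n).apply k l]
            simp
          calc ∑ l, ‖(E ^ n) l k‖ = ∑ l, ‖(E ^ n) k l‖ :=
                Finset.sum_congr rfl fun l _ => hsym l
            _ ≤ ‖E ^ n‖ := rowsum_le_norm _ k
            _ ≤ ‖E‖ ^ n := hpownorm n
  have hsumnorm : Summable fun n => ‖c n • E ^ n‖ := by
    refine Summable.of_nonneg_of_le (fun n => norm_nonneg _) (fun n => ?_)
      (summable_geometric_of_lt_one (norm_nonneg E) hlt)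
    rw [norm_smul, Real.norm_eq_abs]
    calc |c n| * ‖E ^ n‖ ≤ 1 * ‖E‖ ^ n :=
          mul_le_mul (hcb n) (hpownorm n) (norm_nonneg _) zero_le_one
      _ = ‖E‖ ^ n := one_mul _
  have hsummable : Summable fun n => c n • E ^ n := Summable.of_norm hsumnorm
  set S : Matrix (Fin r) (Fin r) ℂ := ∑' n, c n • E ^ n with hSdef
  have hS : HasSum (fun n => c n • E ^ n) S := hsummable.hasSum
  -- Hermitian
  have hSherm : S.IsHermitian := by
    have hstar : star S = S := by
      rw [hSdef, tsum_star]
      congr 1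
      funext n
      rw [star_smul, star_trivial, star_pow, Matrix.star_eq_conjTranspose, hE.eq]
    show Matrix.conjTranspose S = S
    rw [← Matrix.star_eq_conjTranspose]
    exact hstar
  -- Cauchy product
  have hcauchy : S * S = ∑' n : ℕ, ((-1 : ℝ)^n) • E ^ n := by
    rw [hSdef]; refine (tsum_mul_tsum_eq_tsum_sum_antidiagonal_of_summable_norm hsumnorm hsumnorm).trans ?_
    congr 1
    funext n
    calc ∑ ij ∈ Finset.HasAntidiagonal.antidiagonal n, (c ij.1 • E ^ ij.1) * (c ij.2 • E ^ ij.2)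
        = ∑ ij ∈ Finset.HasAntidiagonal.antidiagonal n, (c ij.1 * c ij.2) • E ^ n := by
          refine Finset.sum_congr rfl fun ij hij => ?_
          rw [smul_mul_smul_comm, ← pow_add,
            (Finset.HasAntidiagonal.mem_antidiagonal.mp hij : ij.1 + ij.2 = n)]
      _ = ((-1 : ℝ)^n) • E ^ n := by rw [← Finset.sum_smul, hc, choose_conv]
  have hgeom : S * S = ∑' n : ℕ, (-E) ^ n := by
    rw [hcauchy]
    congr 1
    funext n
    rw [show -E = (-1 : ℝ) • E from by rw [neg_one_smul], smul_pow]
  have hunit : S * S * (1 + E) = 1 := by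
    have hg := geom_series_mul_neg (-E) (by rwa [norm_neg])
    rw [sub_neg_eq_add] at hg
    rw [hgeom]
    exact hg
  have hcomm : Commute (1 + E) S := by
    refine Commute.tsum_right _ fun n => ?_
    exact ((Commute.one_left _).add_left ((Commute.refl E).pow_right n)).smul_right _
  have hSFS : S * (1 + E) * S = 1 := by
    rw [mul_assoc, hcomm.eq, ← mul_assoc, hunit]
  -- entry bound
  have hentS : ∀ j k, ‖(S - 1) j k‖ ≤ ε := by
    intro j k
    have hb : ∀ A : Matrix (Fin r) (Fin r) ℂ, ‖A j k‖ ≤ 1 * ‖A‖ := fun A => by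
      rw [one_mul]; exact entry_le_norm A j k
    let φ₀ : Matrix (Fin r) (Fin r) ℂ →ₗ[ℂ] ℂ :=
      { toFun := fun A => A j k, map_add' := fun _ _ => rfl, map_smul' := fun _ _ => rfl }
    let φ : Matrix (Fin r) (Fin r) ℂ →L[ℂ] ℂ := φ₀.mkContinuous 1 hb
    have hφ : ∀ A : Matrix (Fin r) (Fin r) ℂ, φ A = A j k := fun A => by
      rfl
    have hSjk : HasSum (fun n => c n • ((E ^ n) j k)) (S j k) := by
      have h0 := hS.mapL φ
      have hfun : (fun n => φ (c n • E ^ n)) = fun n => c n • ((E ^ n) j k) := by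
        funext n
        rw [hφ]
        rfl
      rw [hfun, hφ] at h0
      exact h0
    have h1 : HasSum (fun n => c (n+1) • ((E ^ (n+1)) j k))
        (S j k - c 0 • ((E ^ 0) j k)) := by
      have h2 := (hasSum_nat_add_iff' (f := fun n => c n • ((E ^ n) j k)) 1).mpr hSjk
      simpa using h2
    have heq : (S - 1) j k = S j k - c 0 • ((E ^ 0) j k) := by
      simp [Matrix.sub_apply, hc0, pow_zero]
    have hg : HasSum (fun n => (ε/2) * ‖E‖ ^ n) ((ε/2) * (1 - ‖E‖)⁻¹) :=
      (hasSum_geometric_of_lt_one (norm_nonneg E) hlt).mul_left _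
    have hbound : ‖∑' n, c (n+1) • ((E ^ (n+1)) j k)‖ ≤ (ε/2) * (1 - ‖E‖)⁻¹ := by
      refine tsum_of_norm_bounded hg fun n => ?_
      rw [norm_smul, Real.norm_eq_abs]
      calc |c (n+1)| * ‖(E ^ (n+1)) j k‖ ≤ (1/2) * (ε * ‖E‖ ^ n) :=
            mul_le_mul (hcb' n) (hpowent n j k) (norm_nonneg _) (by norm_num)
        _ = (ε/2) * ‖E‖ ^ n := by ring
    have hfinal : (ε/2) * (1 - ‖E‖)⁻¹ ≤ ε := by
      have h23 : (2/3 : ℝ) ≤ 1 - ‖E‖ := by linarith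
      have hinv : (1 - ‖E‖)⁻¹ ≤ 3/2 := by
        rw [show (3/2 : ℝ) = (2/3 : ℝ)⁻¹ by norm_num]
        exact inv_anti₀ (by norm_num) h23
      nlinarith [hε0]
    rw [heq, ← h1.tsum_eq]
    calc ‖∑' n, c (n+1) • ((E ^ (n+1)) j k)‖
        = ‖∑' n, c (n+1) • ((E ^ (n+1)) j k)‖ := rfl
      _ ≤ (ε/2) * (1 - ‖E‖)⁻¹ := hbound
      _ ≤ ε := hfinal
  exact ⟨S, hSherm, hentS, hSFS⟩

end Aux


/-- If the Gram matrix `F_{jk} = ⟨w_j, w_k⟩` of vectors `w₁, …, w_r` in a complex inner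
product space satisfies `‖F - I‖_max ≤ 1/(3r²)`, then there exists a Hermitian matrix `G`
with `‖G - I‖_max ≤ ‖F - I‖_max` such that the vectors `f_k := ∑_l G_{lk} w_l` form an
orthonormal family. -/
theorem stmt_1 {H : Type*} [NormedAddCommGroup H] [InnerProductSpace ℂ H]
    {r : ℕ} (hr : 0 < r) (w : Fin r → H)
    (F : Matrix (Fin r) (Fin r) ℂ)
    (hF : ∀ j k, F j k = @inner ℂ H _ (w j) (w k))
    (hsmall : maxNorm (F - 1) ≤ 1 / (3 * (r : ℝ) ^ 2)) :
    ∃ G : Matrix (Fin r) (Fin r) ℂ, G.IsHermitian ∧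
      maxNorm (G - 1) ≤ maxNorm (F - 1) ∧
      ∀ k k' : Fin r,
        @inner ℂ H _ (∑ l, G l k • w l) (∑ l, G l k' • w l)
          = if k = k' then 1 else 0 := by
  have hne : Nonempty (Fin r) := ⟨⟨0, hr⟩⟩
  set E : Matrix (Fin r) (Fin r) ℂ := F - 1 with hEdef
  set ε : ℝ := maxNorm (F - 1) with hεdef
  have hFherm : F.IsHermitian := by
    refine Matrix.IsHermitian.ext fun i j => ?_
    rw [hF i j, hF j i]
    exact inner_conj_symm _ _
  have hEherm : E.IsHermitian := hFherm.sub Matrix.isHermitian_one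
  have hentries : ∀ j k, ‖E j k‖ ≤ ε := by
    intro j k
    have h1 : ‖E j k‖ ≤ ⨆ k' : Fin r, ‖E j k'‖ :=
      le_ciSup (f := fun k' => ‖E j k'‖)
        (Set.Finite.bddAbove (Set.finite_range _)) k
    have h2 : (⨆ k' : Fin r, ‖E j k'‖) ≤ ε :=
      le_ciSup (f := fun j => ⨆ k' : Fin r, ‖E j k'‖)
        (Set.Finite.bddAbove (Set.finite_range _)) j
    exact h1.trans h2
  have hε0 : 0 ≤ ε := le_trans (norm_nonneg _) (hentries ⟨0, hr⟩ ⟨0, hr⟩)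
  have hr0 : (0:ℝ) < r := by exact_mod_cast hr
  have hr1 : (1:ℝ) ≤ r := by exact_mod_cast hr
  have hsm : (r : ℝ) * ε ≤ 1/3 := by
    calc (r : ℝ) * ε ≤ r * (1 / (3 * (r:ℝ)^2)) := by
          exact mul_le_mul_of_nonneg_left hsmall (le_of_lt hr0)
      _ = 1 / (3 * r) := by field_simp
      _ ≤ 1/3 := by
          rw [div_le_div_iff₀ (by positivity) (by norm_num)]
          linarith
  obtain ⟨G, hGherm, hGent, hGFG⟩ := key hr E hEherm hε0 hentries hsm
  have hFE : 1 + E = F := by rw [hEdef]; abel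
  rw [hFE] at hGFG
  refine ⟨G, hGherm, ?_, ?_⟩
  · refine ciSup_le fun j => ciSup_le fun k => hGent j k
  · intro k k'
    have hrhs : (if k = k' then (1:ℂ) else 0) = (G * F * G) k k' := by
      rw [hGFG, Matrix.one_apply]
    rw [hrhs]
    simp only [sum_inner, inner_smul_left, inner_sum, inner_smul_right, ← hF]
    rw [Matrix.mul_apply]
    refine Finset.sum_congr rfl fun m _ => ?_
    rw [Matrix.mul_apply, Finset.sum_mul, Finset.mul_sum]
    refine Finset.sum_congr rfl fun l _ => ?_
    rw [← hGherm.apply k l, RCLike.star_def]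
    ring
end

section
/- Let H be a complex Hilbert space and let T be a bounded self-adjoint operator on H whose eigenvectors span a dense subspace of H (that is, the topological closure of the algebraic span of all eigenspaces of T is all of H). Let ε > 0, let μ₁ ≤ μ₂ ≤ … ≤ μ_r be real numbers, and let u₁, …, u_r be an orthonormal family in H such that ‖T u_k − μ_k u_k‖ ≤ ε for each k = 1, …, r. Then the dimension (as a cardinal, possibly infinite) of the span of all eigenspaces of T corresponding to eigenvalues lying in the closed interval [μ₁ − √r·ε, μ_r + √r·ε] is at least r. -/
open scoped ComplexConjugate

local notation "⟪" x ", " y "⟫" => @inner ℂ _ _ x y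

set_option maxHeartbeats 2000000 in
/-- Let `T` be a bounded self-adjoint operator on a complex Hilbert space `H` whose
eigenvectors span a dense subspace of `H`. If `μ₁ ≤ … ≤ μ_r` are real numbers and
`u₁, …, u_r` is an orthonormal family with `‖T u_k - μ_k u_k‖ ≤ ε` for each `k`, then the
span of the eigenspaces of `T` corresponding to eigenvalues in
`[μ₁ - √r ε, μ_r + √r ε]` has dimension at least `r`. -/
theorem stmt_2 {H : Type*} [NormedAddCommGroup H] [InnerProductSpace ℂ H] [CompleteSpace H]
    (T : H →L[ℂ] H) (hT : IsSelfAdjoint T)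
    (hdense : (⨆ μ : ℂ, Module.End.eigenspace (T : H →ₗ[ℂ] H) μ).topologicalClosure = ⊤)
    {r : ℕ} (hr : 0 < r) (ε : ℝ) (hε : 0 < ε)
    (μ : Fin r → ℝ) (hμ : Monotone μ)
    (u : Fin r → H) (hu : Orthonormal ℂ u)
    (happrox : ∀ k : Fin r, ‖T (u k) - (μ k : ℂ) • u k‖ ≤ ε) :
    (r : Cardinal) ≤ Module.rank ℂ
      ↥(⨆ t ∈ Set.Icc (μ ⟨0, hr⟩ - Real.sqrt r * ε)
            (μ ⟨r - 1, Nat.sub_lt hr one_pos⟩ + Real.sqrt r * ε),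
          Module.End.eigenspace (T : H →ₗ[ℂ] H) (t : ℂ)) := by
  classical
  by_contra hE
  push_neg at hE
  set a : ℝ := μ ⟨0, hr⟩ - Real.sqrt r * ε with ha
  set b : ℝ := μ ⟨r - 1, Nat.sub_lt hr one_pos⟩ + Real.sqrt r * ε with hb
  set V : ℂ → Submodule ℂ H := fun t => Module.End.eigenspace (T : H →ₗ[ℂ] H) t with hVdef
  set E : Submodule ℂ H := ⨆ t ∈ Set.Icc a b, V (t : ℂ) with hEdef
  have hrpos : (0:ℝ) < (r:ℝ) := by exact_mod_cast hr
  have hsq : Real.sqrt r * Real.sqrt r = (r:ℝ) := Real.mul_self_sqrt (Nat.cast_nonneg r)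
  have hsqrtpos : 0 < Real.sqrt r := Real.sqrt_pos.2 hrpos
  have hSym : (T : H →ₗ[ℂ] H).IsSymmetric := hT.isSymmetric
  have hOrth := hSym.orthogonalFamily_eigenspaces
  -- finite dimensionality of E
  haveI hFD : FiniteDimensional ℂ E :=
    Module.rank_lt_aleph0_iff.mp (hE.trans (Cardinal.nat_lt_aleph0 r))
  have hfr : Module.finrank ℂ E < r := by
    have h1 : ((Module.finrank ℂ E : ℕ) : Cardinal) = Module.rank ℂ E :=
      Module.finrank_eq_rank ℂ E
    rw [← h1] at hE
    exact_mod_cast hE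
  -- basic membership facts
  have hVE : ∀ s : ℝ, s ∈ Set.Icc a b → V (s:ℂ) ≤ E := by
    intro s hs
    rw [hEdef]
    exact le_iSup₂ (f := fun (s : ℝ) (_ : s ∈ Set.Icc a b) => V (s:ℂ)) s hs
  have hVmem : ∀ (t : ℂ) (x : H), x ∈ V t → T x = t • x := fun t x hx =>
    Module.End.mem_eigenspace_iff.mp hx
  have hVmem' : ∀ (t : ℂ) (x : H), T x = t • x → x ∈ V t := fun t x hx =>
    Module.End.mem_eigenspace_iff.mpr hx
  -- T-invariance of E
  have hEinv : ∀ x ∈ E, T x ∈ E := by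
    intro x hx
    have hle : E ≤ Submodule.comap (T : H →ₗ[ℂ] H) E := by
      conv_lhs => rw [hEdef]
      refine iSup₂_le fun s hs => ?_
      intro y hy
      rw [Submodule.mem_comap]
      show T y ∈ E
      rw [hVmem _ _ hy]
      exact (hVE s hs) (Submodule.smul_mem _ _ hy)
    exact hle hx
  -- T-invariance of Eᗮ
  have hEperpinv : ∀ x ∈ Eᗮ, T x ∈ Eᗮ := by
    intro x hx
    rw [Submodule.mem_orthogonal] at hx ⊢
    intro y hy
    have h1 : ⟪T y, x⟫ = ⟪y, T x⟫ := hSym y x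
    rw [← h1]
    exact hx _ (hEinv y hy)
  -- the "good" set of eigenvalues and the complementary space F'
  set good : Set ℂ := {t : ℂ | ∃ s : ℝ, s ∈ Set.Icc a b ∧ (s:ℂ) = t} with hgood
  set F' : Submodule ℂ H := ⨆ t : {t : ℂ // t ∉ good}, V (t:ℂ) with hF'def
  have hinner0 : ∀ (t1 t2 : ℂ), t1 ≠ t2 → ∀ x ∈ V t1, ∀ y ∈ V t2, ⟪x, y⟫ = 0 := by
    intro t1 t2 h x hx y hy
    exact hOrth h ⟨x, hx⟩ ⟨y, hy⟩
  have hsupsplit : E ⊔ F' = ⨆ t : ℂ, V t := by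
    apply le_antisymm
    · apply sup_le
      · exact iSup₂_le fun s _ => le_iSup V ((s:ℝ):ℂ)
      · exact iSup_le fun t => le_iSup V (t:ℂ)
    · refine iSup_le fun t => ?_
      by_cases hg : t ∈ good
      · obtain ⟨s, hs, rfl⟩ := hg
        exact le_trans (hVE s hs) le_sup_left
      · exact le_trans (le_iSup (fun t : {t : ℂ // t ∉ good} => V (t:ℂ)) ⟨t, hg⟩) le_sup_right
  have hF'perp : F' ≤ Eᗮ := by
    refine iSup_le ?_
    rintro ⟨t, ht⟩
    intro y hy
    rw [Submodule.mem_orthogonal]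
    intro x hx
    have hEy : E ≤ (ℂ ∙ y)ᗮ := by
      refine iSup₂_le fun s hs => ?_
      intro z hz
      rw [Submodule.mem_orthogonal_singleton_iff_inner_left]
      refine hinner0 ((s:ℝ):ℂ) t ?_ z hz y hy
      intro hst
      exact ht ⟨s, hs, hst⟩
    exact Submodule.mem_orthogonal_singleton_iff_inner_left.mp (hEy hx)
  -- the closure F of F' contains Eᗮ
  haveI : CompleteSpace E := FiniteDimensional.complete ℂ E
  set P := Submodule.orthogonalProjectionOnto E with hPdef
  set F : Submodule ℂ H := F'.topologicalClosure with hFdef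
  have hperpF : ∀ x ∈ Eᗮ, x ∈ F := by
    intro x hx
    set φ : H →L[ℂ] H := ContinuousLinearMap.id ℂ H - E.subtypeL.comp P with hφ
    have hφapp : ∀ y : H, φ y = y - ↑(P y) := fun y => rfl
    have hmaps : Set.MapsTo φ ((E ⊔ F' : Submodule ℂ H) : Set H) (F' : Set H) := by
      rintro y hy
      rw [SetLike.mem_coe, Submodule.mem_sup] at hy
      obtain ⟨e, he, f, hf, rfl⟩ := hy
      have hPe : (P e : H) = e := by
        exact congrArg Subtype.val (Submodule.orthogonalProjectionOnto_mem_subspace_eq_self (K := E) ⟨e, he⟩)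
      have hPf : P f = 0 :=
        Submodule.orthogonalProjectionOnto_apply_of_mem_orthogonal (hF'perp hf)
      rw [SetLike.mem_coe]
      have : φ (e + f) = f := by
        rw [hφapp, map_add, hPf, add_zero]
        rw [hPe]
        abel
      rw [this]
      exact hf
    have hxcl : x ∈ closure ((E ⊔ F' : Submodule ℂ H) : Set H) := by
      have h1 : (E ⊔ F').topologicalClosure = ⊤ := by
        rw [hsupsplit]; exact hdense
      have : x ∈ ((E ⊔ F').topologicalClosure : Set H) := by rw [h1]; trivial
      rwa [Submodule.topologicalClosure_coe] at this
    have := map_mem_closure φ.continuous hxcl hmaps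
    have hφx : φ x = x := by
      rw [hφapp, Submodule.orthogonalProjectionOnto_apply_of_mem_orthogonal hx]
      simp
    rw [hφx] at this
    show x ∈ (F'.topologicalClosure : Set H)
    rw [Submodule.topologicalClosure_coe]
    exact this
  -- T-invariance of F'
  have hVF' : ∀ t : {t : ℂ // t ∉ good}, V (t:ℂ) ≤ F' := by
    intro t
    rw [hF'def]
    exact le_iSup (fun t : {t : ℂ // t ∉ good} => V (t:ℂ)) t
  have hF'inv : ∀ y ∈ F', T y ∈ F' := by
    have hle : F' ≤ Submodule.comap (T : H →ₗ[ℂ] H) F' := by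
      conv_lhs => rw [hF'def]
      refine iSup_le fun t => ?_
      intro z hz
      rw [Submodule.mem_comap]
      show T z ∈ F'
      rw [hVmem _ _ hz]
      exact Submodule.smul_mem _ _ (hVF' t hz)
    exact fun y hy => hle hy
  -- T-invariance of F
  have hFinv : ∀ y ∈ F, T y ∈ F := by
    intro y hy
    have hmaps : Set.MapsTo T (F' : Set H) (F' : Set H) := fun z hz => hF'inv z hz
    have hycl : y ∈ closure (F' : Set H) := by
      rw [← Submodule.topologicalClosure_coe]
      exact hy
    have h4 := map_mem_closure T.continuous hycl hmaps
    rw [hFdef, ← SetLike.mem_coe, Submodule.topologicalClosure_coe]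
    exact h4
  -- lower bound for the quadratic form on F'
  have hlow' : ∀ m : ℝ, μ ⟨0, hr⟩ ≤ m → m ≤ μ ⟨r - 1, Nat.sub_lt hr one_pos⟩ →
      ∀ y ∈ F', (r:ℝ) * ε^2 * ‖y‖^2 ≤ ‖T y - (m:ℂ) • y‖^2 := by
    intro m hm1 hm2 y hy
    rw [hF'def, Submodule.mem_iSup_iff_exists_dfinsupp'] at hy
    obtain ⟨f, rfl⟩ := hy
    rw [DFinsupp.sum]
    have hOrth' : OrthogonalFamily ℂ (fun i : {t : ℂ // t ∉ good} => V (i:ℂ))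
        (fun i => (V (i:ℂ)).subtypeₗᵢ) := hOrth.comp Subtype.coe_injective
    have hTy : T (∑ i ∈ f.support, ((f i : H))) - (m:ℂ) • (∑ i ∈ f.support, ((f i : H)))
        = ∑ i ∈ f.support, ((((i : ℂ) - (m:ℂ)) • (f i : H))) := by
      rw [map_sum, Finset.smul_sum, ← Finset.sum_sub_distrib]
      refine Finset.sum_congr rfl fun i _ => ?_
      rw [hVmem _ _ (f i).2, sub_smul]
    rw [hTy]
    have h1 : ‖∑ i ∈ f.support, ((((i:ℂ) - (m:ℂ)) • (f i : H)))‖^2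
        = ∑ i ∈ f.support, ‖(i:ℂ) - (m:ℂ)‖^2 * ‖(f i : H)‖^2 := by
      have h5 := hOrth'.norm_sum (fun i => ((i:ℂ) - (m:ℂ)) • (f i)) f.support
      simp only [Submodule.coe_subtypeₗᵢ, Submodule.coe_subtype, Submodule.coe_smul_of_tower,
        Submodule.coe_norm, norm_smul, mul_pow] at h5
      exact h5
    have h2 : ‖(∑ i ∈ f.support, (f i : H))‖^2 = ∑ i ∈ f.support, ‖(f i : H)‖^2 := by
      have h5 := hOrth'.norm_sum (fun i => f i) f.support
      simp only [Submodule.coe_subtypeₗᵢ, Submodule.coe_subtype, Submodule.coe_norm] at h5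
      exact h5
    rw [h1, h2, Finset.mul_sum]
    refine Finset.sum_le_sum fun i _ => ?_
    by_cases h0 : (f i : H) = 0
    · simp [h0]
    · have hne : V (i:ℂ) ≠ ⊥ := by
        intro hbot
        apply h0
        exact (Submodule.eq_bot_iff _).mp hbot _ (f i).2
      have hev : Module.End.HasEigenvalue (T : H →ₗ[ℂ] H) (i:ℂ) :=
        Module.End.hasEigenvalue_iff.mpr hne
      obtain ⟨sR, hsR⟩ := Complex.conj_eq_iff_real.mp (hSym.conj_eigenvalue_eq_self hev)
      have hsRout : sR ∉ Set.Icc a b := by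
        intro hin
        exact i.2 ⟨sR, hin, hsR.symm⟩
      have hnorm : ‖(i:ℂ) - (m:ℂ)‖ = |sR - m| := by
        rw [hsR, ← Complex.ofReal_sub, Complex.norm_real, Real.norm_eq_abs]
      have habs : Real.sqrt r * ε ≤ |sR - m| := by
        rw [Set.mem_Icc, not_and_or, not_le, not_le] at hsRout
        rcases hsRout with hlt | hgt
        · rw [ha] at hlt
          have h6 : Real.sqrt r * ε ≤ m - sR := by linarith
          calc Real.sqrt r * ε ≤ m - sR := h6
            _ ≤ |sR - m| := by rw [abs_sub_comm]; exact le_abs_self _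
        · rw [hb] at hgt
          have h6 : Real.sqrt r * ε ≤ sR - m := by linarith
          exact h6.trans (le_abs_self _)
      have hkey : (r:ℝ) * ε^2 ≤ ‖(i:ℂ) - (m:ℂ)‖^2 := by
        rw [hnorm]
        have h7 : (Real.sqrt r * ε)^2 ≤ |sR - m|^2 :=
          pow_le_pow_left₀ (by positivity) habs 2
        calc (r:ℝ) * ε^2 = (Real.sqrt r * ε)^2 := by rw [mul_pow, sq (Real.sqrt r), hsq]
          _ ≤ |sR - m|^2 := h7
      have := mul_le_mul_of_nonneg_right hkey (sq_nonneg ‖(f i : H)‖)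
      calc (r:ℝ) * ε^2 * ‖(f i : H)‖^2 ≤ ‖(i:ℂ) - (m:ℂ)‖^2 * ‖(f i : H)‖^2 := this
        _ = _ := by ring
  -- extend the lower bound to F by continuity
  have hlow : ∀ m : ℝ, μ ⟨0, hr⟩ ≤ m → m ≤ μ ⟨r - 1, Nat.sub_lt hr one_pos⟩ →
      ∀ y ∈ F, (r:ℝ) * ε^2 * ‖y‖^2 ≤ ‖T y - (m:ℂ) • y‖^2 := by
    intro m hm1 hm2 y hy
    have hsub : (F' : Set H) ⊆ {z : H | (r:ℝ)*ε^2*‖z‖^2 ≤ ‖T z - (m:ℂ) • z‖^2} :=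
      fun z hz => hlow' m hm1 hm2 z hz
    have hcl : IsClosed {z : H | (r:ℝ)*ε^2*‖z‖^2 ≤ ‖T z - (m:ℂ) • z‖^2} := by
      apply isClosed_le
      · fun_prop
      · fun_prop
    have hmin := closure_minimal hsub hcl
    apply hmin
    rw [← Submodule.topologicalClosure_coe]
    exact hy
  -- strict spectral gap on Eᗮ
  have hstrict : ∀ m : ℝ, μ ⟨0, hr⟩ ≤ m → m ≤ μ ⟨r - 1, Nat.sub_lt hr one_pos⟩ →
      ∀ x, x ∈ Eᗮ → x ≠ 0 → Real.sqrt r * ε * ‖x‖ < ‖T x - (m:ℂ) • x‖ := by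
    intro m hm1 hm2 x hxperp hx0
    have hxF : x ∈ F := hperpF x hxperp
    have hge := hlow m hm1 hm2 x hxF
    rcases lt_or_ge (Real.sqrt r * ε * ‖x‖) ‖T x - (m:ℂ) • x‖ with h | hcon
    · exact h
    exfalso
    have hup : ‖T x - (m:ℂ) • x‖^2 ≤ (r:ℝ) * ε^2 * ‖x‖^2 := by
      have h1 : ‖T x - (m:ℂ) • x‖^2 ≤ (Real.sqrt r * ε * ‖x‖)^2 :=
        pow_le_pow_left₀ (norm_nonneg _) hcon 2
      calc ‖T x - (m:ℂ) • x‖^2 ≤ (Real.sqrt r * ε * ‖x‖)^2 := h1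
        _ = (r:ℝ) * ε^2 * ‖x‖^2 := by rw [mul_pow, mul_pow, sq (Real.sqrt r), hsq]
    have heq : ‖T x - (m:ℂ) • x‖^2 = (r:ℝ) * ε^2 * ‖x‖^2 := le_antisymm hup hge
    -- the operators S and A
    set S : H →L[ℂ] H := T - (m:ℂ) • ContinuousLinearMap.id ℂ H with hSdef
    have hSapp : ∀ y : H, S y = T y - (m:ℂ) • y := fun y => rfl
    have hSsym : ∀ y z : H, ⟪S y, z⟫ = ⟪y, S z⟫ := by
      intro y z
      rw [hSapp, hSapp, inner_sub_left, inner_sub_right, inner_smul_left, inner_smul_right,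
        Complex.conj_ofReal]
      have h0 : ⟪T y, z⟫ = ⟪y, T z⟫ := hSym y z
      rw [h0]
    have hSF : ∀ y ∈ F, S y ∈ F := fun y hy =>
      F.sub_mem (hFinv y hy) (F.smul_mem _ hy)
    have hSperp : ∀ y ∈ Eᗮ, S y ∈ Eᗮ := fun y hy =>
      Submodule.sub_mem _ (hEperpinv y hy) (Submodule.smul_mem _ _ hy)
    set A : H →L[ℂ] H := S.comp S - (((r:ℝ) * ε^2 : ℝ) : ℂ) • ContinuousLinearMap.id ℂ H
      with hAdef
    have hAapp : ∀ y : H, A y = S (S y) - (((r:ℝ) * ε^2 : ℝ) : ℂ) • y := fun y => rfl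
    have hAsym : ∀ y z : H, ⟪A y, z⟫ = ⟪y, A z⟫ := by
      intro y z
      rw [hAapp, hAapp, inner_sub_left, inner_sub_right, inner_smul_left, inner_smul_right,
        Complex.conj_ofReal, hSsym (S y) z, hSsym y (S z)]
    have hAF : ∀ y ∈ F, A y ∈ F := fun y hy =>
      F.sub_mem (hSF _ (hSF _ hy)) (F.smul_mem _ hy)
    have hAinner : ∀ y : H, ⟪A y, y⟫ = ((‖S y‖^2 - (r:ℝ)*ε^2*‖y‖^2 : ℝ) : ℂ) := by
      intro y
      rw [hAapp, inner_sub_left, inner_smul_left, Complex.conj_ofReal, hSsym (S y) y,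
        inner_self_eq_norm_sq_to_K, inner_self_eq_norm_sq_to_K]
      push_cast
      abel
    have hApos : ∀ y, y ∈ F → 0 ≤ ‖S y‖^2 - (r:ℝ)*ε^2*‖y‖^2 := by
      intro y hy
      have h2 := hlow m hm1 hm2 y hy
      have h3 : S y = T y - (m:ℂ) • y := hSapp y
      rw [h3]
      linarith
    have hA0 : ⟪A x, x⟫ = 0 := by
      rw [hAinner, hSapp, heq]
      norm_num
    -- A x is orthogonal to everything in F
    have hB0 : ∀ z, z ∈ F → ⟪A x, z⟫ = 0 := by
      intro z hz
      by_contra hc0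
      set c : ℂ := ⟪A x, z⟫ with hc
      have hn : 0 < Complex.normSq c := Complex.normSq_pos.mpr hc0
      set q : ℝ := ‖S z‖^2 - (r:ℝ)*ε^2*‖z‖^2 with hq
      have hq0 : 0 ≤ q := hApos z hz
      have hq1 : (0:ℝ) < q + 1 := by linarith
      set s : ℝ := 1/(q+1) with hsdef
      have hs0 : 0 < s := by positivity
      set z' : H := (starRingEnd ℂ) c • z with hz'def
      have hz'F : z' ∈ F := F.smul_mem _ hz
      have hAxz' : ⟪A x, z'⟫ = ((Complex.normSq c : ℝ) : ℂ) := by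
        rw [hz'def, inner_smul_right, ← hc, mul_comm, Complex.mul_conj]
      have hAz'x : ⟪A z', x⟫ = ((Complex.normSq c : ℝ) : ℂ) := by
        rw [hAsym z' x, ← inner_conj_symm, hAxz', Complex.conj_ofReal]
      have hAz'z' : ⟪A z', z'⟫ = ((Complex.normSq c * q : ℝ) : ℂ) := by
        rw [hz'def, map_smul, inner_smul_left, inner_smul_right, Complex.conj_conj]
        rw [hAinner z, ← hq, ← mul_assoc, Complex.mul_conj]
        push_cast
        ring
      have hmem : x + ((-s : ℝ) : ℂ) • z' ∈ F := F.add_mem hxF (F.smul_mem _ hz'F)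
      have hposval : 0 ≤ ‖S (x + ((-s:ℝ):ℂ) • z')‖^2 - (r:ℝ)*ε^2*‖x + ((-s:ℝ):ℂ) • z'‖^2 :=
        hApos _ hmem
      have hval : ((‖S (x + ((-s:ℝ):ℂ) • z')‖^2 - (r:ℝ)*ε^2*‖x + ((-s:ℝ):ℂ) • z'‖^2 : ℝ) : ℂ)
          = ((2 * (-s) * Complex.normSq c + (-s)^2 * (Complex.normSq c * q) : ℝ) : ℂ) := by
        rw [← hAinner]
        rw [map_add, map_smul]
        simp only [inner_add_left, inner_add_right, inner_smul_left, inner_smul_right,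
          hA0, hAxz', hAz'x, hAz'z', Complex.conj_ofReal]
        push_cast
        ring
      have h9 : ‖S (x + ((-s:ℝ):ℂ) • z')‖^2 - (r:ℝ)*ε^2*‖x + ((-s:ℝ):ℂ) • z'‖^2
          = 2 * (-s) * Complex.normSq c + (-s)^2 * (Complex.normSq c * q) :=
        Complex.ofReal_injective hval
      have hsq1 : s * (q + 1) = 1 := by
        rw [hsdef]
        field_simp
      have hcontr : s * q < 2 := by nlinarith
      nlinarith [mul_pos hs0 hn, hposval, h9, hcontr, mul_pos (mul_pos hs0 hn) hs0]
    have hAx0 : A x = 0 := by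
      have h10 := hB0 (A x) (hAF x hxF)
      rwa [inner_self_eq_zero] at h10
    -- factor the kernel relation
    set c0 : ℝ := Real.sqrt r * ε with hc0def
    have hc0pos : 0 < c0 := by rw [hc0def]; positivity
    have hc0sq : ((c0:ℝ):ℂ) * ((c0:ℝ):ℂ) = (((r:ℝ) * ε^2 : ℝ) : ℂ) := by
      have h11 : c0 * c0 = (r:ℝ) * ε^2 := by
        rw [hc0def]
        linear_combination (ε^2) * hsq
      push_cast [← h11]
      ring
    set y : H := S x - (c0 : ℂ) • x with hydef
    have h12 : S y + (c0:ℂ) • y = A x := by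
      rw [hydef, hAapp, map_sub, map_smul, smul_sub, smul_smul, hc0sq]
      abel
    have h13 : S y = -((c0:ℂ) • y) := by
      rw [hAx0] at h12
      exact eq_neg_of_add_eq_zero_left h12
    have h14 : T y = ((m - c0 : ℝ) : ℂ) • y := by
      have h15 : S y = T y - (m:ℂ) • y := hSapp y
      rw [h13] at h15
      have h16 : T y = -((c0:ℂ) • y) + (m:ℂ) • y := sub_eq_iff_eq_add.mp h15.symm
      rw [h16]
      push_cast [sub_smul]
      abel
    have hc0nonneg : (0:ℝ) ≤ Real.sqrt r * ε := by positivity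
    have hmc1 : m - c0 ∈ Set.Icc a b := by
      rw [Set.mem_Icc, ha, hb, hc0def]
      constructor <;> linarith
    have hyE : y ∈ E := hVE (m - c0) hmc1 (hVmem' _ y h14)
    have hyperp : y ∈ Eᗮ := by
      rw [hydef]
      exact Submodule.sub_mem _ (hSperp x hxperp) (Submodule.smul_mem _ _ hxperp)
    have hy0 : y = 0 := by
      have h17 : ⟪y, y⟫ = 0 := (Submodule.mem_orthogonal E y).mp hyperp y hyE
      exact inner_self_eq_zero.mp h17
    have h18 : S x = (c0:ℂ) • x := by
      have h18' : S x - (c0:ℂ) • x = 0 := by rw [← hydef, hy0]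
      exact sub_eq_zero.mp h18'
    have h19 : T x = ((m + c0 : ℝ):ℂ) • x := by
      have h20 : S x = T x - (m:ℂ) • x := hSapp x
      rw [h18] at h20
      have h21 : T x = (c0:ℂ) • x + (m:ℂ) • x := sub_eq_iff_eq_add.mp h20.symm
      rw [h21]
      push_cast [add_smul]
      abel
    have hmc2 : m + c0 ∈ Set.Icc a b := by
      rw [Set.mem_Icc, ha, hb, hc0def]
      constructor <;> linarith
    have hxE : x ∈ E := hVE (m + c0) hmc2 (hVmem' _ x h19)
    have h22 : ⟪x, x⟫ = 0 := (Submodule.mem_orthogonal E x).mp hxperp x hxE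
    exact hx0 (inner_self_eq_zero.mp h22)
  -- final assembly
  haveI : Nonempty (Fin r) := ⟨⟨0, hr⟩⟩
  have hnli : ¬ LinearIndependent ℂ (fun k : Fin r => P (u k)) := by
    intro hli
    have h1 := hli.fintype_card_le_finrank
    rw [Fintype.card_fin] at h1
    omega
  obtain ⟨g, hgsum, k0, hk0⟩ := Fintype.not_linearIndependent_iff.mp hnli
  set w : Fin r → H := fun k => u k - ↑(P (u k)) with hwdef
  have hwperp : ∀ k, w k ∈ Eᗮ := fun k => Submodule.sub_starProjection_mem_orthogonal (K := E) (u k)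
  have hwbound : ∀ k, ‖T (w k) - ((μ k : ℝ):ℂ) • w k‖^2 ≤ ε^2 := by
    intro k
    have he : (↑(P (u k)) : H) ∈ E := (P (u k)).2
    have hsplit : (T ↑(P (u k)) - ((μ k:ℝ):ℂ) • ↑(P (u k))) + (T (w k) - ((μ k:ℝ):ℂ) • w k)
        = T (u k) - ((μ k:ℝ):ℂ) • u k := by
      rw [hwdef]
      simp only [map_sub, smul_sub]
      abel
    have hTe : T ↑(P (u k)) - ((μ k:ℝ):ℂ) • ↑(P (u k)) ∈ E :=
      E.sub_mem (hEinv _ he) (E.smul_mem _ he)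
    have hTw : T (w k) - ((μ k:ℝ):ℂ) • w k ∈ Eᗮ :=
      Submodule.sub_mem _ (hEperpinv _ (hwperp k)) (Submodule.smul_mem _ _ (hwperp k))
    have h2 : ⟪T ↑(P (u k)) - ((μ k:ℝ):ℂ) • ↑(P (u k)), T (w k) - ((μ k:ℝ):ℂ) • w k⟫ = 0 :=
      (Submodule.mem_orthogonal E _).mp hTw _ hTe
    have h3 : ‖T (u k) - ((μ k:ℝ):ℂ) • u k‖^2
        = ‖T ↑(P (u k)) - ((μ k:ℝ):ℂ) • ↑(P (u k))‖^2 + ‖T (w k) - ((μ k:ℝ):ℂ) • w k‖^2 := by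
      rw [← hsplit, sq, sq, sq]
      exact norm_add_sq_eq_norm_sq_add_norm_sq_of_inner_eq_zero _ _ h2
    have h4 := happrox k
    have h5 : ‖T (u k) - ((μ k:ℝ):ℂ) • u k‖^2 ≤ ε^2 := pow_le_pow_left₀ (norm_nonneg _) h4 2
    nlinarith [sq_nonneg ‖T ↑(P (u k)) - ((μ k:ℝ):ℂ) • ↑(P (u k))‖]
  have hwlt : ∀ k, ‖w k‖^2 < 1/(r:ℝ) := by
    intro k
    by_cases h0 : w k = 0
    · rw [h0, norm_zero, zero_pow two_ne_zero]
      exact div_pos one_pos hrpos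
    · have hk1 : μ ⟨0, hr⟩ ≤ μ k := hμ (by simp [Fin.le_def])
      have hk2 : μ k ≤ μ ⟨r - 1, Nat.sub_lt hr one_pos⟩ := by
        apply hμ
        simp only [Fin.le_def]
        omega
      have h1 := hstrict (μ k) hk1 hk2 (w k) (hwperp k) h0
      have h2 : ‖T (w k) - ((μ k:ℝ):ℂ) • w k‖ ≤ ε := by
        have h2' := hwbound k
        nlinarith [norm_nonneg (T (w k) - ((μ k:ℝ):ℂ) • w k)]
      have h3 : Real.sqrt r * ε * ‖w k‖ < ε := lt_of_lt_of_le h1 h2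
      have h4 : Real.sqrt r * ‖w k‖ < 1 := by
        nlinarith [mul_nonneg (Real.sqrt_nonneg (r:ℝ)) (norm_nonneg (w k))]
      rw [lt_div_iff₀ hrpos]
      have h5 : (Real.sqrt r * ‖w k‖) * (Real.sqrt r * ‖w k‖) < 1 := by
        nlinarith [mul_nonneg (Real.sqrt_nonneg (r:ℝ)) (norm_nonneg (w k))]
      have h6 : ‖w k‖^2 * (r:ℝ) = (Real.sqrt r * ‖w k‖) * (Real.sqrt r * ‖w k‖) := by
        linear_combination (-‖w k‖^2) * hsq
      linarith
  have hsumw : ∑ k, ‖w k‖^2 < 1 := by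
    have h1 : ∑ k : Fin r, ‖w k‖^2 < ∑ _k : Fin r, 1/(r:ℝ) :=
      Finset.sum_lt_sum_of_nonempty Finset.univ_nonempty (fun k _ => hwlt k)
    have h2 : ∑ _k : Fin r, (1/(r:ℝ)) = 1 := by
      rw [Finset.sum_const, Finset.card_univ, Fintype.card_fin, nsmul_eq_mul]
      field_simp
    linarith
  set v : H := ∑ k, g k • u k with hvdef
  have hPsum : ∑ k, g k • (↑(P (u k)) : H) = 0 := by
    have h1 : ((∑ k, g k • P (u k) : E) : H) = ((0 : E) : H) := by rw [hgsum]
    simpa using h1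
  have hvw : v = ∑ k, g k • w k := by
    rw [hvdef, hwdef]
    simp only [smul_sub]
    rw [Finset.sum_sub_distrib, hPsum, sub_zero]
  have hvnorm : ‖v‖^2 = ∑ k, ‖g k‖^2 := by
    have h2 : ⟪v, v⟫ = ∑ k, ((starRingEnd ℂ) (g k)) * g k := by
      rw [hvdef]
      exact hu.inner_sum g g Finset.univ
    rw [inner_self_eq_norm_sq_to_K] at h2
    have h3 : ∀ k : Fin r, ((starRingEnd ℂ) (g k)) * g k = ((‖g k‖^2 : ℝ) : ℂ) := by
      intro k
      rw [mul_comm, Complex.mul_conj, Complex.normSq_eq_norm_sq]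
    simp_rw [h3] at h2
    have h4 : ((‖v‖^2 : ℝ) : ℂ) = ((∑ k, ‖g k‖^2 : ℝ) : ℂ) := by
      push_cast at h2 ⊢
      exact h2
    exact Complex.ofReal_injective h4
  have hvne : v ≠ 0 := by
    intro h0
    have h1 := Fintype.linearIndependent_iff.mp hu.linearIndependent g
      (by rw [← hvdef]; exact h0)
    exact hk0 (h1 k0)
  have hv1 : ‖v‖ ≤ ∑ k, ‖g k‖ * ‖w k‖ := by
    rw [hvw]
    refine (norm_sum_le _ _).trans (le_of_eq ?_)
    exact Finset.sum_congr rfl fun k _ => norm_smul _ _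
  have hCS : (∑ k, ‖g k‖ * ‖w k‖)^2 ≤ (∑ k, ‖g k‖^2) * ∑ k, ‖w k‖^2 :=
    Finset.sum_mul_sq_le_sq_mul_sq _ _ _
  have hvpos : 0 < ‖v‖^2 := pow_pos (norm_pos_iff.mpr hvne) 2
  have hfinal : ‖v‖^2 < ‖v‖^2 := by
    calc ‖v‖^2 ≤ (∑ k, ‖g k‖ * ‖w k‖)^2 := pow_le_pow_left₀ (norm_nonneg v) hv1 2
      _ ≤ (∑ k, ‖g k‖^2) * ∑ k, ‖w k‖^2 := hCS
      _ = ‖v‖^2 * ∑ k, ‖w k‖^2 := by rw [hvnorm]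
      _ < ‖v‖^2 * 1 := mul_lt_mul_of_pos_left hsumw hvpos
      _ = ‖v‖^2 := mul_one _
  exact absurd hfinal (lt_irrefl _)
end

section
/- Let U be an open subset of ℝ^d × ℝ^d and let v : U → ℂ^m be a continuously differentiable column-vector-valued function satisfying v(x,ξ)* v(x,ξ) = 1 at every point of U. Define P := v v* (a matrix-valued function on U). Then at every point of U one has the scalar identity v* {P, v} = v* {P, P} v. -/
/-- The partial derivative `B_{x^α}` of a matrix-valued function on `ℝ^d × ℝ^d`,
taken entrywise in the direction of the `α`-th coordinate of the first (`x`) factor. -/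
noncomputable def pX {d a b : ℕ} (α : Fin d)
    (B : (Fin d → ℝ) × (Fin d → ℝ) → Matrix (Fin a) (Fin b) ℂ)
    (z : (Fin d → ℝ) × (Fin d → ℝ)) : Matrix (Fin a) (Fin b) ℂ :=
  Matrix.of fun i j => fderiv ℝ (fun w => B w i j) z (Pi.single α 1, 0)

/-- The partial derivative `B_{ξ_α}` of a matrix-valued function on `ℝ^d × ℝ^d`,
taken entrywise in the direction of the `α`-th coordinate of the second (`ξ`) factor. -/
noncomputable def pXi {d a b : ℕ} (α : Fin d)
    (B : (Fin d → ℝ) × (Fin d → ℝ) → Matrix (Fin a) (Fin b) ℂ)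
    (z : (Fin d → ℝ) × (Fin d → ℝ)) : Matrix (Fin a) (Fin b) ℂ :=
  Matrix.of fun i j => fderiv ℝ (fun w => B w i j) z (0, Pi.single α 1)

/-- The Poisson bracket `{B, C} = ∑_α (B_{x^α} C_{ξ_α} - B_{ξ_α} C_{x^α})` of two
matrix-valued functions on `ℝ^d × ℝ^d`. -/
noncomputable def poisson {d a b c : ℕ}
    (B : (Fin d → ℝ) × (Fin d → ℝ) → Matrix (Fin a) (Fin b) ℂ)
    (C : (Fin d → ℝ) × (Fin d → ℝ) → Matrix (Fin b) (Fin c) ℂ)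
    (z : (Fin d → ℝ) × (Fin d → ℝ)) : Matrix (Fin a) (Fin c) ℂ :=
  ∑ α : Fin d, (pX α B z * pXi α C z - pXi α B z * pX α C z)

/-- The generalised Poisson bracket
`{B, C, D} = ∑_α (B_{x^α} C D_{ξ_α} - B_{ξ_α} C D_{x^α})` of three matrix-valued
functions on `ℝ^d × ℝ^d`. -/
noncomputable def poisson3 {d a b c e : ℕ}
    (B : (Fin d → ℝ) × (Fin d → ℝ) → Matrix (Fin a) (Fin b) ℂ)
    (C : (Fin d → ℝ) × (Fin d → ℝ) → Matrix (Fin b) (Fin c) ℂ)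
    (D : (Fin d → ℝ) × (Fin d → ℝ) → Matrix (Fin c) (Fin e) ℂ)
    (z : (Fin d → ℝ) × (Fin d → ℝ)) : Matrix (Fin a) (Fin e) ℂ :=
  ∑ α : Fin d, (pX α B z * C z * pXi α D z - pXi α B z * C z * pX α D z)

open Matrix

/-- Auxiliary: the entrywise derivative of a matrix-valued function in an arbitrary
direction `e`. -/
noncomputable def pD {d a b : ℕ} (e : (Fin d → ℝ) × (Fin d → ℝ))
    (B : (Fin d → ℝ) × (Fin d → ℝ) → Matrix (Fin a) (Fin b) ℂ)
    (z : (Fin d → ℝ) × (Fin d → ℝ)) : Matrix (Fin a) (Fin b) ℂ :=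
  Matrix.of fun i j => fderiv ℝ (fun w => B w i j) z e

lemma pX_eq_pD {d a b : ℕ} (α : Fin d)
    (B : (Fin d → ℝ) × (Fin d → ℝ) → Matrix (Fin a) (Fin b) ℂ) (z) :
    pX α B z = pD (Pi.single α 1, 0) B z := rfl

lemma pXi_eq_pD {d a b : ℕ} (α : Fin d)
    (B : (Fin d → ℝ) × (Fin d → ℝ) → Matrix (Fin a) (Fin b) ℂ) (z) :
    pXi α B z = pD (0, Pi.single α 1) B z := rfl

/-- Product rule for `pD`. -/
lemma pD_mul {d a b c : ℕ} (e : (Fin d → ℝ) × (Fin d → ℝ))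
    (B : (Fin d → ℝ) × (Fin d → ℝ) → Matrix (Fin a) (Fin b) ℂ)
    (C : (Fin d → ℝ) × (Fin d → ℝ) → Matrix (Fin b) (Fin c) ℂ)
    (z : (Fin d → ℝ) × (Fin d → ℝ))
    (hB : ∀ i j, DifferentiableAt ℝ (fun w => B w i j) z)
    (hC : ∀ i j, DifferentiableAt ℝ (fun w => C w i j) z) :
    pD e (fun w => B w * C w) z = pD e B z * C z + B z * pD e C z := by
  ext i j
  have h : HasFDerivAt (fun w => ∑ k, B w i k * C w k j)
      (∑ k, (B z i k • fderiv ℝ (fun w => C w k j) z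
        + C z k j • fderiv ℝ (fun w => B w i k) z)) z :=
    HasFDerivAt.fun_sum fun k _ => ((hB i k).hasFDerivAt.fun_mul (hC k j).hasFDerivAt)
  simp only [pD, Matrix.of_apply, Matrix.add_apply, Matrix.mul_apply]
  rw [h.fderiv]
  simp only [ContinuousLinearMap.coe_sum', Finset.sum_apply, ContinuousLinearMap.add_apply,
    ContinuousLinearMap.coe_smul', Pi.smul_apply, smul_eq_mul]
  rw [← Finset.sum_add_distrib]
  exact Finset.sum_congr rfl fun k _ => by ring

/-- `pD` commutes with the conjugate transpose. -/
lemma pD_conj {d a b : ℕ} (e : (Fin d → ℝ) × (Fin d → ℝ))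
    (B : (Fin d → ℝ) × (Fin d → ℝ) → Matrix (Fin a) (Fin b) ℂ)
    (z : (Fin d → ℝ) × (Fin d → ℝ))
    (hB : ∀ i j, DifferentiableAt ℝ (fun w => B w i j) z) :
    pD e (fun w => (B w)ᴴ) z = (pD e B z)ᴴ := by
  ext i j
  have h : HasFDerivAt (fun w => (starRingEnd ℂ) (B w j i))
      ((((starL' ℝ : ℂ ≃L[ℝ] ℂ) : ℂ →L[ℝ] ℂ)) ∘L fderiv ℝ (fun w => B w j i) z) z :=
    (hB j i).hasFDerivAt.star
  simp [pD, h.fderiv, Matrix.conjTranspose_apply]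

/-- The derivative of the unit-length condition vanishes. -/
lemma pD_unit {d m : ℕ} (e : (Fin d → ℝ) × (Fin d → ℝ))
    {U : Set ((Fin d → ℝ) × (Fin d → ℝ))} (hU : IsOpen U)
    (v : (Fin d → ℝ) × (Fin d → ℝ) → Matrix (Fin m) (Fin 1) ℂ)
    (hunit : ∀ z ∈ U, (v z)ᴴ * v z = 1) {z} (hz : z ∈ U) :
    pD e (fun w => (v w)ᴴ * v w) z = 0 := by
  ext i j
  have hev : (fun w => ((v w)ᴴ * v w) i j)
      =ᶠ[nhds z] (fun _ => (1 : Matrix (Fin 1) (Fin 1) ℂ) i j) := by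
    filter_upwards [hU.mem_nhds hz] with w hw
    rw [hunit w hw]
  simp [pD, hev.fderiv_eq]

/-- The key pointwise matrix-algebra identity. -/
lemma key_identity {m : ℕ} (v A B : Matrix (Fin m) (Fin 1) ℂ)
    (h1 : vᴴ * v = 1) (hA : Aᴴ * v = -(vᴴ * A)) (hB : Bᴴ * v = -(vᴴ * B)) :
    vᴴ * ((A * vᴴ + v * Aᴴ) * B - (B * vᴴ + v * Bᴴ) * A)
      = vᴴ * ((A * vᴴ + v * Aᴴ) * (B * vᴴ + v * Bᴴ)
          - (B * vᴴ + v * Bᴴ) * (A * vᴴ + v * Aᴴ)) * v := by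
  have h1' : ∀ {c : ℕ} (X : Matrix (Fin 1) (Fin c) ℂ), vᴴ * (v * X) = X := fun X => by
    rw [← Matrix.mul_assoc, h1, Matrix.one_mul]
  have hA' : ∀ {c : ℕ} (X : Matrix (Fin 1) (Fin c) ℂ), Aᴴ * (v * X) = -(vᴴ * (A * X)) :=
    fun X => by rw [← Matrix.mul_assoc, hA, Matrix.neg_mul, Matrix.mul_assoc]
  have hB' : ∀ {c : ℕ} (X : Matrix (Fin 1) (Fin c) ℂ), Bᴴ * (v * X) = -(vᴴ * (B * X)) :=
    fun X => by rw [← Matrix.mul_assoc, hB, Matrix.neg_mul, Matrix.mul_assoc]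
  simp only [Matrix.mul_add, Matrix.add_mul, Matrix.sub_mul, Matrix.mul_sub, Matrix.mul_assoc,
    h1', hA', hB', h1, hA, hB, Matrix.mul_one, Matrix.mul_neg, Matrix.neg_mul, Matrix.one_mul,
    neg_neg]
  abel

open Matrix in
/-- If `v : U → ℂ^m` is a continuously differentiable column of unit length
(`v* v = 1` on `U`) and `P := v v*`, then `v* {P, v} = v* {P, P} v` on `U`. -/
theorem stmt_5 {d m : ℕ} (U : Set ((Fin d → ℝ) × (Fin d → ℝ))) (hU : IsOpen U)
    (v : (Fin d → ℝ) × (Fin d → ℝ) → Matrix (Fin m) (Fin 1) ℂ)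
    (hv : ∀ i j, ContDiffOn ℝ 1 (fun w => v w i j) U)
    (hunit : ∀ z ∈ U, (v z)ᴴ * v z = 1) :
    ∀ z ∈ U,
      (v z)ᴴ * poisson (fun w => v w * (v w)ᴴ) v z
        = (v z)ᴴ * poisson (fun w => v w * (v w)ᴴ) (fun w => v w * (v w)ᴴ) z * v z := by
  intro z hz
  have hd : ∀ i j, DifferentiableAt ℝ (fun w => v w i j) z := fun i j =>
    ((hv i j).contDiffAt (hU.mem_nhds hz)).differentiableAt one_ne_zero
  have hdH : ∀ i j, DifferentiableAt ℝ (fun w => (v w)ᴴ i j) z := fun i j => (hd j i).star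
  have hP : ∀ e, pD e (fun w => v w * (v w)ᴴ) z = pD e v z * (v z)ᴴ + v z * (pD e v z)ᴴ :=
    fun e => by rw [pD_mul e v (fun w => (v w)ᴴ) z hd hdH, pD_conj e v z hd]
  have hrel : ∀ e, (pD e v z)ᴴ * v z = -((v z)ᴴ * pD e v z) := fun e => by
    have h0 := pD_unit e hU v hunit hz
    rw [pD_mul e (fun w => (v w)ᴴ) v z hdH hd, pD_conj e v z hd] at h0
    exact eq_neg_of_add_eq_zero_left h0
  simp only [poisson, Matrix.mul_sum, Matrix.sum_mul]
  refine Finset.sum_congr rfl fun α _ => ?_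
  rw [pX_eq_pD, pX_eq_pD, pXi_eq_pD, pXi_eq_pD, hP, hP]
  exact key_identity (v z) _ _ (hunit z hz) (hrel _) (hrel _)
end
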